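/- Let b > 0, T ≥ 0, σ² > 0, let M be a natural number with M ≥ 1, and let ω ∈ ℝ. Then ∫_0^∞ (1/σ²) e^{−u/σ²} · exp( i T u ω / (1 − i b ω) ) / (1 − i b ω)^M du = (1 − i b ω)^{−(M−1)} · (1 − i (b + T σ²) ω)^{−1}. -/

import Mathlib

open MeasureTheory Set Filter

lemma integral_cexp_Ioi_zero (a : ℂ) (ha : a.re < 0) :
    ∫ u in Set.Ioi (0 : ℝ), Complex.exp (a * u) = -a⁻¹ := by
  have ha0 : a ≠ 0 := fun h => by simp [h] at ha
  have hd : ∀ x ∈ Set.Ici (0 : ℝ),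
      HasDerivAt (fun u : ℝ => a⁻¹ * Complex.exp (a * u)) (Complex.exp (a * x)) x := by
    intro x _
    have h1 : HasDerivAt (fun z : ℂ => a⁻¹ * Complex.exp (a * z))
        (a⁻¹ * (Complex.exp (a * x) * a)) (x : ℂ) := by
      have := ((Complex.hasDerivAt_exp (a * x)).comp (x : ℂ)
        ((hasDerivAt_id (x : ℂ)).const_mul a)).const_mul a⁻¹
      simpa [mul_comm] using this
    have h2 := h1.comp_ofReal
    have h3 : a⁻¹ * (Complex.exp (a * ↑x) * a) = Complex.exp (a * x) := by
      field_simp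
    rwa [h3] at h2
  have hint : IntegrableOn (fun u : ℝ => Complex.exp (a * u)) (Set.Ioi 0) := by
    apply Integrable.mono' (g := fun u : ℝ => Real.exp (-(-a.re) * u))
      (exp_neg_integrableOn_Ioi 0 (by linarith))
    · exact (Complex.continuous_exp.comp (continuous_const.mul Complex.continuous_ofReal)).aestronglyMeasurable
    · filter_upwards with u
      simp [Complex.norm_exp, Complex.mul_re]
  have htend : Tendsto (fun u : ℝ => a⁻¹ * Complex.exp (a * u)) atTop (nhds 0) := by
    rw [tendsto_zero_iff_norm_tendsto_zero]
    have : (fun u : ℝ => ‖a⁻¹ * Complex.exp (a * u)‖)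
        = fun u : ℝ => ‖a⁻¹‖ * Real.exp (a.re * u) := by
      ext u
      simp [Complex.norm_exp, Complex.mul_re]
    rw [this]
    have : Tendsto (fun u : ℝ => a.re * u) atTop atBot :=
      tendsto_id.const_mul_atTop_of_neg ha
    simpa using (Real.tendsto_exp_atBot.comp this).const_mul ‖a⁻¹‖
  have := integral_Ioi_of_hasDerivAt_of_tendsto' hd hint htend
  simpa using this

open MeasureTheory in
/-- Rayleigh-fading averaging integral (Lemma 2 of the paper): for `b > 0`, `T ≥ 0`,
`σ² > 0`, `M ≥ 1` and `ω ∈ ℝ`,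
`∫_0^∞ (1/σ2) e^{-u/σ2} exp(iTuω/(1 - ibω)) / (1 - ibω)^M du
  = (1 - ibω)^{-(M-1)} (1 - i(b + Tσ2)ω)^{-1}`. -/
theorem integral_rayleigh_average (b T σ2 : ℝ) (hb : 0 < b) (hT : 0 ≤ T)
    (hσ2 : 0 < σ2) (M : ℕ) (hM : 1 ≤ M) (ω : ℝ) :
    ∫ u in Set.Ioi (0 : ℝ),
        ((1 / σ2 * Real.exp (-u / σ2) : ℝ) : ℂ) *
          Complex.exp (Complex.I * (T : ℂ) * (u : ℂ) * (ω : ℂ) /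
            (1 - Complex.I * (b : ℂ) * (ω : ℂ))) /
          (1 - Complex.I * (b : ℂ) * (ω : ℂ)) ^ M
      = ((1 - Complex.I * (b : ℂ) * (ω : ℂ)) ^ (M - 1))⁻¹ *
          (1 - Complex.I * ((b : ℂ) + (T : ℂ) * (σ2 : ℂ)) * (ω : ℂ))⁻¹ := by
  set z : ℂ := 1 - Complex.I * (b : ℂ) * (ω : ℂ) with hz_def
  set w : ℂ := 1 - Complex.I * ((b : ℂ) + (T : ℂ) * (σ2 : ℂ)) * (ω : ℂ) with hw_def
  have hz : z ≠ 0 := fun h => by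
    have := congrArg Complex.re h
    simp [hz_def, Complex.mul_re, Complex.mul_im] at this
  have hw : w ≠ 0 := fun h => by
    have := congrArg Complex.re h
    simp [hw_def, Complex.mul_re, Complex.mul_im] at this
  set a : ℂ := Complex.I * (T : ℂ) * (ω : ℂ) / z - 1 / σ2 with ha_def
  have ha_re : a.re < 0 := by
    have h1 : (Complex.I * (T : ℂ) * (ω : ℂ) / z).re ≤ 0 := by
      rw [Complex.div_re]
      have hzre : z.re = 1 := by simp [hz_def, Complex.mul_re, Complex.mul_im]
      have hzim : z.im = -(b * ω) := by simp [hz_def, Complex.mul_re, Complex.mul_im]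
      have hre : (Complex.I * (T : ℂ) * (ω : ℂ)).re = 0 := by
        simp [Complex.mul_re, Complex.mul_im]
      have him : (Complex.I * (T : ℂ) * (ω : ℂ)).im = T * ω := by
        simp [Complex.mul_re, Complex.mul_im]
      have hnorm : 0 < Complex.normSq z := Complex.normSq_pos.mpr hz
      have e : (Complex.I * (T : ℂ) * (ω : ℂ)).re * z.re / Complex.normSq z
          + (Complex.I * (T : ℂ) * (ω : ℂ)).im * z.im / Complex.normSq z
          = -(T * b * ω ^ 2) / Complex.normSq z := by
        rw [hre, hzre, him, hzim]; ring
      rw [e]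
      exact div_nonpos_of_nonpos_of_nonneg (neg_nonpos.mpr (by positivity)) hnorm.le
    have h2 : a.re = (Complex.I * (T : ℂ) * (ω : ℂ) / z).re - 1 / σ2 := by
      simp [ha_def, Complex.div_re, Complex.div_im]
    rw [h2]
    have : 0 < 1 / σ2 := by positivity
    linarith
  have key := integral_cexp_Ioi_zero a ha_re
  have ha0 : a ≠ 0 := fun h => by simp [h] at ha_re
  have hcongr : ∀ u : ℝ,
      ((1 / σ2 * Real.exp (-u / σ2) : ℝ) : ℂ) *
          Complex.exp (Complex.I * (T : ℂ) * (u : ℂ) * (ω : ℂ) / z) / z ^ M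
        = (1 / (σ2 : ℂ) / z ^ M) * Complex.exp (a * u) := by
    intro u
    have h1 : ((1 / σ2 * Real.exp (-u / σ2) : ℝ) : ℂ)
        = (1 / σ2 : ℂ) * Complex.exp ((-u / σ2 : ℝ) : ℂ) := by
      push_cast [Complex.ofReal_exp]
      ring
    rw [h1]
    have h2 : a * u = Complex.I * (T : ℂ) * (u : ℂ) * (ω : ℂ) / z + ((-u / σ2 : ℝ) : ℂ) := by
      rw [ha_def]
      push_cast
      ring
    rw [h2, Complex.exp_add]
    ring
  rw [setIntegral_congr_fun measurableSet_Ioi (fun u _ => hcongr u), MeasureTheory.integral_const_mul, key]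
  -- algebra: (1/σ2 / z^M) * (-a⁻¹) = (z^(M-1))⁻¹ * w⁻¹
  obtain ⟨k, rfl⟩ : ∃ k, M = k + 1 := ⟨M - 1, (Nat.succ_pred_eq_of_pos hM).symm⟩
  have hna : -a = w / ((σ2 : ℂ) * z) := by
    rw [ha_def, hw_def, hz_def]
    have hσ : (σ2 : ℂ) ≠ 0 := by exact_mod_cast hσ2.ne'
    have hz' : (1 - Complex.I * (ω : ℂ) * (b : ℂ)) ≠ 0 := by
      intro h; apply hz; rw [hz_def]; linear_combination h
    field_simp
    ring
  rw [← inv_neg, hna]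
  have hσ : (σ2 : ℂ) ≠ 0 := by exact_mod_cast hσ2.ne'
  clear_value z w
  simp only [Nat.add_sub_cancel]
  rw [inv_div, pow_succ]
  have hzk : z ^ k ≠ 0 := pow_ne_zero _ hz
  field_simp
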